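/- A preference function of length n is atomic if and only if no proper nonempty prefix of it consists of all occurrences of the letters 1 through j for some j ≥ 1. The number a_n of atomic preference functions satisfies F(x) = 1 − 1/P(x) where P(x) = Σ_{n≥0} f_n x^n is the ordinary generating function of preference functions (ordered Bell numbers, f_0 = 1) and F(x) = Σ_{n≥1} a_n x^n; equivalently, every preference function factors uniquely as a concatenation of shifted atomic preference functions. -/

import Mathlib

/-- A preference function of length `n` (encoded as a function `ℕ → ℕ` vanishing off
`{1, …, n}`): for some `k ≤ n`, all of `1, …, k` occur and nothing larger occurs. -/
def IsPref (n : ℕ) (p : ℕ → ℕ) : Prop :=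
  (∀ i, i ∉ Finset.Icc 1 n → p i = 0) ∧
  ∃ k, k ≤ n ∧ (∀ i ∈ Finset.Icc 1 n, 1 ≤ p i ∧ p i ≤ k) ∧
    ∀ j ∈ Finset.Icc 1 k, ∃ i ∈ Finset.Icc 1 n, p i = j

/-- A preference function is atomic iff no proper nonempty prefix of it consists of all
occurrences in the word of the letters `1, …, j` for some `j ≥ 1`: i.e. there is no
`1 ≤ m < n` and `j ≥ 1` such that the first `m` letters use only values `≤ j`, all later
letters are `> j`, and all of `1, …, j` occur among the first `m` letters. -/
def IsAtomicPref (n : ℕ) (p : ℕ → ℕ) : Prop :=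
  IsPref n p ∧
  ¬ ∃ m, 1 ≤ m ∧ m < n ∧ ∃ j, 1 ≤ j ∧
      (∀ i ∈ Finset.Icc 1 m, p i ≤ j) ∧
      (∀ i ∈ Finset.Icc (m + 1) n, j < p i) ∧
      (∀ v ∈ Finset.Icc 1 j, ∃ i ∈ Finset.Icc 1 m, p i = v)

namespace AtomicPrefAux

open Finset

/-- `m` is a split point of `p` (of length `n`). -/
def Split (n : ℕ) (p : ℕ → ℕ) (m : ℕ) : Prop :=
  1 ≤ m ∧ m < n ∧ ∀ i ∈ Icc 1 m, ∀ i' ∈ Icc (m + 1) n, p i < p i'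

instance (n : ℕ) (p : ℕ → ℕ) : DecidablePred (Split n p) := fun m => by
  unfold Split; infer_instance

/-- The largest split point (0 if none). -/
def sp (n : ℕ) (p : ℕ → ℕ) : ℕ := Nat.findGreatest (Split n p) n

lemma sp_le (n : ℕ) (p : ℕ → ℕ) : sp n p ≤ n := Nat.findGreatest_le n

lemma sp_spec {n : ℕ} {p : ℕ → ℕ} (h : sp n p ≠ 0) : Split n p (sp n p) := by
  have h2 := (not_iff_not.2 (Nat.findGreatest_eq_zero_iff (P := Split n p) (k := n))).1 h
  push_neg at h2
  obtain ⟨m, _, hmn, hm⟩ := h2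
  exact Nat.findGreatest_spec hmn hm

lemma sp_lt {n : ℕ} (hn : 1 ≤ n) (p : ℕ → ℕ) : sp n p < n := by
  rcases Nat.eq_zero_or_pos (sp n p) with h | h
  · omega
  · exact (sp_spec (by omega)).2.1

/-- coverage of `1..j` by `m` positions forces `j ≤ m`. -/
lemma cov_le {j m : ℕ} {p : ℕ → ℕ} (h : ∀ v ∈ Icc 1 j, ∃ i ∈ Icc 1 m, p i = v) :
    j ≤ m := by
  have hsub : Icc 1 j ⊆ (Icc 1 m).image p := by
    intro v hv
    obtain ⟨i, hi, hpi⟩ := h v hv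
    exact mem_image.2 ⟨i, hi, hpi⟩
  have h1 := Finset.card_le_card hsub
  have h2 := Finset.card_image_le (s := Icc 1 m) (f := p)
  simpa using h1.trans h2

/-- the `k` in a preference function equals the sup of the values. -/
lemma k_eq_sup {n k : ℕ} {p : ℕ → ℕ}
    (hub : ∀ i ∈ Icc 1 n, 1 ≤ p i ∧ p i ≤ k)
    (hcov : ∀ j ∈ Icc 1 k, ∃ i ∈ Icc 1 n, p i = j) :
    k = (Icc 1 n).sup p := by
  refine le_antisymm ?_ (Finset.sup_le fun i hi => (hub i hi).2)
  rcases Nat.eq_zero_or_pos k with hk | hk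
  · simp [hk]
  · obtain ⟨i, hi, hpi⟩ := hcov k (mem_Icc.2 ⟨hk, le_rfl⟩)
    exact hpi ▸ Finset.le_sup hi

def pre (m : ℕ) (p : ℕ → ℕ) : ℕ → ℕ := fun i => if i ∈ Icc 1 m then p i else 0

def suf (n m : ℕ) (p : ℕ → ℕ) : ℕ → ℕ :=
  fun i => if i ∈ Icc 1 (n - m) then p (m + i) - (Icc 1 m).sup p else 0

def cat (n m : ℕ) (q r : ℕ → ℕ) : ℕ → ℕ :=
  fun i => if i ∈ Icc 1 m then q i
    else if i ∈ Icc 1 n then r (i - m) + (Icc 1 m).sup q else 0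

/-- values after a split point exceed the sup of values before it. -/
lemma suf_gt {n m : ℕ} {p : ℕ → ℕ} (hp : IsPref n p)
    (hm : m = 0 ∨ Split n p m) :
    ∀ i ∈ Icc (m + 1) n, (Icc 1 m).sup p < p i := by
  intro i hi
  rcases hm with rfl | hsp
  · have : i ∈ Icc 1 n := by rw [mem_Icc] at hi ⊢; omega
    obtain ⟨k, -, hub, -⟩ := hp.2
    have := (hub i this).1
    simpa using Nat.lt_of_lt_of_le Nat.zero_lt_one this
  · obtain ⟨i0, hi0, he⟩ :=
      Finset.exists_mem_eq_sup (Icc 1 m) ⟨1, mem_Icc.2 ⟨le_rfl, hsp.1⟩⟩ p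
    rw [he]
    exact hsp.2.2 i0 hi0 i hi

lemma pre_pref {n m : ℕ} {p : ℕ → ℕ} (hp : IsPref n p) (hmn : m ≤ n)
    (hm : m = 0 ∨ Split n p m) : IsPref m (pre m p) := by
  obtain ⟨hz, k, hkn, hub, hcov⟩ := hp
  set j := (Icc 1 m).sup p with hj
  have hcovj : ∀ v ∈ Icc 1 j, ∃ i ∈ Icc 1 m, pre m p i = v := by
    intro v hv
    rw [mem_Icc] at hv
    have hjk : j ≤ k := Finset.sup_le fun i hi => by
      refine (hub i ?_).2
      rw [mem_Icc] at hi ⊢; omega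
    obtain ⟨i, hi, hpi⟩ := hcov v (mem_Icc.2 ⟨hv.1, hv.2.trans hjk⟩)
    rw [mem_Icc] at hi
    have him : i ≤ m := by
      by_contra hc
      have := suf_gt ⟨hz, k, hkn, hub, hcov⟩ hm i (mem_Icc.2 ⟨by omega, hi.2⟩)
      omega
    refine ⟨i, mem_Icc.2 ⟨hi.1, him⟩, ?_⟩
    simp only [pre]
    rw [if_pos (mem_Icc.2 ⟨hi.1, him⟩)]
    exact hpi
  refine ⟨fun i hi => by simp [pre, hi], j, ?_, ?_, hcovj⟩
  · refine cov_le (p := pre m p) hcovj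
  · intro i hi
    have hin : i ∈ Icc 1 n := by rw [mem_Icc] at hi ⊢; omega
    simp only [pre, if_pos hi]
    exact ⟨(hub i hin).1, Finset.le_sup hi⟩

lemma suf_pref {n m : ℕ} {p : ℕ → ℕ} (hp : IsPref n p) (hmn : m ≤ n)
    (hm : m = 0 ∨ Split n p m) : IsPref (n - m) (suf n m p) := by
  obtain ⟨hz, k, hkn, hub, hcov⟩ := hp
  set j := (Icc 1 m).sup p with hj
  have hK : k = (Icc 1 n).sup p := k_eq_sup hub hcov
  have hjk : j ≤ k := by
    rw [hK]
    exact Finset.sup_le fun i hi => Finset.le_sup (by rw [mem_Icc] at hi ⊢; omega)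
  have hgt := suf_gt ⟨hz, k, hkn, hub, hcov⟩ hm
  refine ⟨fun i hi => by simp [suf, hi], k - j, ?_, ?_, ?_⟩
  · refine (cov_le (p := suf n m p) ?_)
    intro v hv
    rw [mem_Icc] at hv
    obtain ⟨i, hi, hpi⟩ := hcov (v + j) (mem_Icc.2 ⟨by omega, by omega⟩)
    rw [mem_Icc] at hi
    have him : m < i := by
      by_contra hc
      have : p i ≤ j := Finset.le_sup (mem_Icc.2 ⟨hi.1, by omega⟩)
      omega
    refine ⟨i - m, mem_Icc.2 ⟨by omega, by omega⟩, ?_⟩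
    simp only [suf, if_pos (mem_Icc.2 (⟨by omega, by omega⟩ : 1 ≤ i - m ∧ i - m ≤ n - m))]
    rw [show m + (i - m) = i by omega, hpi]
    omega
  · intro i hi
    rw [mem_Icc] at hi
    have hmi : m + i ∈ Icc (m + 1) n := mem_Icc.2 ⟨by omega, by omega⟩
    have h1 := hgt (m + i) hmi
    have h2 : p (m + i) ≤ k := (hub (m + i) (mem_Icc.2 ⟨by omega, by omega⟩)).2
    simp only [suf, if_pos (mem_Icc.2 hi)]
    omega
  · intro v hv
    rw [mem_Icc] at hv
    obtain ⟨i, hi, hpi⟩ := hcov (v + j) (mem_Icc.2 ⟨by omega, by omega⟩)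
    rw [mem_Icc] at hi
    have him : m < i := by
      by_contra hc
      have : p i ≤ j := Finset.le_sup (mem_Icc.2 ⟨hi.1, by omega⟩)
      omega
    refine ⟨i - m, mem_Icc.2 ⟨by omega, by omega⟩, ?_⟩
    simp only [suf, if_pos (mem_Icc.2 (⟨by omega, by omega⟩ : 1 ≤ i - m ∧ i - m ≤ n - m))]
    rw [show m + (i - m) = i by omega, hpi]
    omega

lemma suf_atomic {n : ℕ} {p : ℕ → ℕ} (hp : IsPref n p) (hn : 1 ≤ n) :
    IsAtomicPref (n - sp n p) (suf n (sp n p) p) := by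
  set M := sp n p with hM
  have hMsp : M = 0 ∨ Split n p M := by
    rcases Nat.eq_zero_or_pos M with h | h
    · exact Or.inl h
    · exact Or.inr (sp_spec (by omega))
  have hMn : M ≤ n := sp_le n p
  have hgt := suf_gt hp hMsp
  set j := (Icc 1 M).sup p with hj
  refine ⟨suf_pref hp hMn hMsp, ?_⟩
  rintro ⟨m'', hm1, hm2, j'', hj1, hub'', hgt'', hcov''⟩
  have hval : ∀ i ∈ Icc 1 (n - M), suf n M p i = p (M + i) - j := by
    intro i hi; simp [suf, hi, hj]
  have hsplit : Split n p (M + m'') := by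
    refine ⟨by omega, by omega, ?_⟩
    intro i hi i' hi'
    rw [mem_Icc] at hi hi'
    -- p i' > j + j''
    have hi'1 : i' - M ∈ Icc (m'' + 1) (n - M) := mem_Icc.2 ⟨by omega, by omega⟩
    have hi'2 : i' - M ∈ Icc 1 (n - M) := by rw [mem_Icc] at hi'1 ⊢; omega
    have h1 : j'' < p (M + (i' - M)) - j := by
      have := hgt'' (i' - M) hi'1
      rwa [hval (i' - M) hi'2] at this
    rw [show M + (i' - M) = i' by omega] at h1
    have h1' : j + j'' < p i' := by
      have := hgt i' (mem_Icc.2 ⟨by omega, by omega⟩)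
      omega
    rcases le_or_gt i M with hiM | hiM
    · have : p i ≤ j := Finset.le_sup (mem_Icc.2 ⟨hi.1, hiM⟩)
      omega
    · have hiI : i - M ∈ Icc 1 m'' := mem_Icc.2 ⟨by omega, by omega⟩
      have h2 : suf n M p (i - M) ≤ j'' := hub'' (i - M) hiI
      rw [hval (i - M) (mem_Icc.2 ⟨by omega, by omega⟩)] at h2
      rw [show M + (i - M) = i by omega] at h2
      have : j < p i := hgt i (mem_Icc.2 ⟨by omega, by omega⟩)
      omega
  exact Nat.findGreatest_is_greatest (by omega : sp n p < M + m'') (by omega) hsplit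

lemma cat_pref {n m a : ℕ} {q r : ℕ → ℕ} (hq : IsPref m q) (hr : IsPref a r)
    (hn : n = m + a) : IsPref n (cat n m q r) := by
  obtain ⟨hqz, kq, hkqm, hqub, hqcov⟩ := hq
  obtain ⟨hrz, kr, hkra, hrub, hrcov⟩ := hr
  have hkq : kq = (Icc 1 m).sup q := k_eq_sup hqub hqcov
  refine ⟨?_, kq + kr, by omega, ?_, ?_⟩
  · intro i hi
    rw [mem_Icc] at hi
    have h1 : i ∉ Icc 1 m := by rw [mem_Icc]; omega
    have h2 : i ∉ Icc 1 n := by rw [mem_Icc]; omega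
    simp [cat, h1, h2]
  · intro i hi
    rw [mem_Icc] at hi
    by_cases him : i ∈ Icc 1 m
    · have := hqub i him
      simp only [cat, if_pos him]
      omega
    · have him' : m < i := by rw [mem_Icc] at him; omega
      have hirange : i - m ∈ Icc 1 a := mem_Icc.2 ⟨by omega, by omega⟩
      have := hrub (i - m) hirange
      simp only [cat, if_neg him, if_pos (mem_Icc.2 hi), ← hkq]
      omega
  · intro v hv
    rw [mem_Icc] at hv
    rcases le_or_gt v kq with hvk | hvk
    · obtain ⟨i, hi, hqi⟩ := hqcov v (mem_Icc.2 ⟨hv.1, hvk⟩)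
      have hi' : i ∈ Icc 1 n := by rw [mem_Icc] at hi ⊢; omega
      exact ⟨i, hi', by simp [cat, hi, hqi]⟩
    · obtain ⟨i, hi, hri⟩ := hrcov (v - kq) (mem_Icc.2 ⟨by omega, by omega⟩)
      rw [mem_Icc] at hi
      have h1 : m + i ∉ Icc 1 m := by rw [mem_Icc]; omega
      have h2 : m + i ∈ Icc 1 n := mem_Icc.2 ⟨by omega, by omega⟩
      refine ⟨m + i, h2, ?_⟩
      simp only [cat, if_neg h1, if_pos h2, show m + i - m = i by omega, hri, ← hkq]
      omega

lemma cat_pre_suf {n : ℕ} {p : ℕ → ℕ} (hp : IsPref n p) :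
    cat n (sp n p) (pre (sp n p) p) (suf n (sp n p) p) = p := by
  set M := sp n p with hM
  have hMsp : M = 0 ∨ Split n p M := by
    rcases Nat.eq_zero_or_pos M with h | h
    · exact Or.inl h
    · exact Or.inr (sp_spec (by omega))
  have hMn : M ≤ n := sp_le n p
  have hgt := suf_gt hp hMsp
  have hsup : (Icc 1 M).sup (pre M p) = (Icc 1 M).sup p :=
    Finset.sup_congr rfl fun i hi => by simp [pre, hi]
  funext i
  by_cases hiM : i ∈ Icc 1 M
  · simp [cat, hiM, pre]
  · by_cases hin : i ∈ Icc 1 n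
    · have hin' := mem_Icc.1 hin
      have hiM' : ¬(1 ≤ i ∧ i ≤ M) := fun h => hiM (mem_Icc.2 h)
      have hi1 : i - M ∈ Icc 1 (n - M) := mem_Icc.2 ⟨by omega, by omega⟩
      have hgti := hgt i (mem_Icc.2 ⟨by omega, by omega⟩)
      simp only [cat, if_neg hiM, if_pos hin, hsup]
      simp only [suf, if_pos hi1, show M + (i - M) = i by omega]
      omega
    · simp only [cat, if_neg hiM, if_neg hin]
      exact (hp.1 i hin).symm

lemma pre_cat {n m a : ℕ} {q r : ℕ → ℕ} (hq : IsPref m q) (hn : n = m + a) :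
    pre m (cat n m q r) = q := by
  funext i
  by_cases hi : i ∈ Icc 1 m
  · simp [pre, cat, hi]
  · simp only [pre, if_neg hi]
    exact (hq.1 i hi).symm

lemma sup_cat {n m a : ℕ} {q r : ℕ → ℕ} (hn : n = m + a) :
    (Icc 1 m).sup (cat n m q r) = (Icc 1 m).sup q :=
  Finset.sup_congr rfl fun i hi => by simp [cat, hi]

lemma cat_apply_right {n m a : ℕ} {q r : ℕ → ℕ} (hn : n = m + a) {i : ℕ}
    (hi : i ∈ Icc 1 a) : cat n m q r (m + i) = r i + (Icc 1 m).sup q := by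
  rw [mem_Icc] at hi
  have h1 : m + i ∉ Icc 1 m := by rw [mem_Icc]; omega
  have h2 : m + i ∈ Icc 1 n := mem_Icc.2 ⟨by omega, by omega⟩
  simp [cat, h1, h2, show m + i - m = i by omega]

lemma suf_cat {n m a : ℕ} {q r : ℕ → ℕ} (hr : IsPref a r) (hn : n = m + a) :
    suf n m (cat n m q r) = r := by
  funext i
  by_cases hi : i ∈ Icc 1 (n - m)
  · have hia : i ∈ Icc 1 a := by rw [mem_Icc] at hi ⊢; omega
    simp only [suf, if_pos hi, sup_cat hn, cat_apply_right hn hia]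
    omega
  · simp only [suf, if_neg hi]
    refine (hr.1 i ?_).symm
    rw [mem_Icc] at hi ⊢; omega

lemma sp_cat {n m a : ℕ} {q r : ℕ → ℕ} (hq : IsPref m q) (hr : IsAtomicPref a r)
    (hn : n = m + a) (ha : 1 ≤ a) : sp n (cat n m q r) = m := by
  obtain ⟨hrp, hratom⟩ := hr
  set p := cat n m q r with hp
  have hle : m ≤ sp n p := by
    rcases Nat.eq_zero_or_pos m with h | h
    · omega
    · refine Nat.le_findGreatest (by omega) ⟨h, by omega, ?_⟩
      intro i hi i' hi'
      rw [mem_Icc] at hi hi'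
      have h1 : p i = q i := by simp [hp, cat, mem_Icc.2 ⟨hi.1, hi.2⟩]
      have h2 : q i ≤ (Icc 1 m).sup q := Finset.le_sup (mem_Icc.2 hi)
      have hi'a : i' - m ∈ Icc 1 a := mem_Icc.2 ⟨by omega, by omega⟩
      have h3 : p i' = r (i' - m) + (Icc 1 m).sup q := by
        have := cat_apply_right (q := q) (r := r) hn hi'a
        rwa [show m + (i' - m) = i' by omega] at this
      have h4 : 1 ≤ r (i' - m) := (hrp.2.choose_spec.2.1 (i' - m) hi'a).1
      omega
  refine le_antisymm ?_ hle
  by_contra hc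
  push_neg at hc
  have hM0 : sp n p ≠ 0 := by omega
  obtain ⟨hM1, hM2, hMsplit⟩ := sp_spec hM0
  set M := sp n p with hM
  -- build an atomicity witness for r
  set m'' := M - m with hm''
  set j'' := (Icc 1 m'').sup r with hj''
  have hm''a : m'' < a := by omega
  have hm''1 : 1 ≤ m'' := by omega
  have hval : ∀ i ∈ Icc 1 a, p (m + i) = r i + (Icc 1 m).sup q :=
    fun i hi => cat_apply_right hn hi
  have hgt'' : ∀ i ∈ Icc (m'' + 1) a, j'' < r i := by
    intro i hi
    rw [mem_Icc] at hi
    obtain ⟨i0, hi0, he0⟩ :=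
      Finset.exists_mem_eq_sup (Icc 1 m'') ⟨1, mem_Icc.2 ⟨le_rfl, hm''1⟩⟩ r
    rw [mem_Icc] at hi0
    have h1 : p (m + i0) = r i0 + (Icc 1 m).sup q :=
      hval i0 (mem_Icc.2 ⟨hi0.1, by omega⟩)
    have h2 : p (m + i) = r i + (Icc 1 m).sup q := hval i (mem_Icc.2 ⟨by omega, hi.2⟩)
    have h3 := hMsplit (m + i0) (mem_Icc.2 ⟨by omega, by omega⟩)
      (m + i) (mem_Icc.2 ⟨by omega, by omega⟩)
    rw [hj'', he0]
    omega
  have hj''1 : 1 ≤ j'' := by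
    have h1 : (1 : ℕ) ∈ Icc 1 m'' := mem_Icc.2 ⟨le_rfl, hm''1⟩
    have h2 : 1 ≤ r 1 := (hrp.2.choose_spec.2.1 1 (mem_Icc.2 ⟨le_rfl, by omega⟩)).1
    exact h2.trans (Finset.le_sup h1)
  refine hratom ⟨m'', hm''1, hm''a, j'', hj''1, ?_, hgt'', ?_⟩
  · intro i hi
    exact Finset.le_sup hi
  · intro v hv
    rw [mem_Icc] at hv
    obtain ⟨hrz, kr, hkra, hrub, hrcov⟩ := hrp
    have hkr : kr = (Icc 1 a).sup r := k_eq_sup hrub hrcov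
    have hj''kr : j'' ≤ kr := by
      rw [hkr]
      exact Finset.sup_le fun i hi => Finset.le_sup (by rw [mem_Icc] at hi ⊢; omega)
    obtain ⟨i, hi, hri⟩ := hrcov v (mem_Icc.2 ⟨hv.1, by omega⟩)
    rw [mem_Icc] at hi
    have him : i ≤ m'' := by
      by_contra hcc
      have := hgt'' i (mem_Icc.2 ⟨by omega, hi.2⟩)
      omega
    exact ⟨i, mem_Icc.2 ⟨hi.1, him⟩, hri⟩

lemma dec_eq_aux {n : ℕ} (m1 m2 : Fin n)
    (q1 q2 : ℕ → ℕ) (hq1 : IsPref m1.1 q1) (hq2 : IsPref m2.1 q2)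
    (r1 r2 : ℕ → ℕ) (hr1 : IsAtomicPref (n - m1.1) r1) (hr2 : IsAtomicPref (n - m2.1) r2)
    (hm : m1.1 = m2.1) (hq : q1 = q2) (hr : r1 = r2) :
    (⟨m1, ⟨q1, hq1⟩, ⟨r1, hr1⟩⟩ :
        Σ m : Fin n, {q : ℕ → ℕ // IsPref m.1 q} × {r : ℕ → ℕ // IsAtomicPref (n - m.1) r}) =
      ⟨m2, ⟨q2, hq2⟩, ⟨r2, hr2⟩⟩ := by
  obtain ⟨m1, hb1⟩ := m1
  obtain ⟨m2, hb2⟩ := m2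
  dsimp at hm hq1 hq2 hr1 hr2
  subst hm
  subst hq
  subst hr
  rfl

/-- The decomposition equivalence. -/
noncomputable def decEquiv (n : ℕ) (hn : 1 ≤ n) :
    {p : ℕ → ℕ // IsPref n p} ≃
      Σ m : Fin n, {q : ℕ → ℕ // IsPref m.1 q} × {r : ℕ → ℕ // IsAtomicPref (n - m.1) r} where
  toFun p :=
    ⟨⟨sp n p.1, sp_lt hn p.1⟩,
      ⟨pre (sp n p.1) p.1, pre_pref p.2 (sp_le n p.1) (by
        rcases Nat.eq_zero_or_pos (sp n p.1) with h | h
        · exact Or.inl h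
        · exact Or.inr (sp_spec (by omega)))⟩,
      ⟨suf n (sp n p.1) p.1, suf_atomic p.2 hn⟩⟩
  invFun x :=
    ⟨cat n x.1.1 x.2.1.1 x.2.2.1,
      cat_pref x.2.1.2 x.2.2.2.1 (by have := x.1.2; omega)⟩
  left_inv p := Subtype.ext (cat_pre_suf p.2)
  right_inv x := by
    obtain ⟨⟨m, hm⟩, ⟨q, hq⟩, ⟨r, hr⟩⟩ := x
    have hnma : n = m + (n - m) := by omega
    have ha : 1 ≤ n - m := by omega
    have h1 : sp n (cat n m q r) = m := sp_cat hq hr hnma ha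
    have h2 : pre m (cat n m q r) = q := pre_cat hq hnma
    have h3 : suf n m (cat n m q r) = r := suf_cat hr.1 hnma
    refine dec_eq_aux _ _ _ _ _ _ _ _ _ _ h1 ?_ ?_
    · show pre (sp n (cat n m q r)) (cat n m q r) = q
      rw [h1]; exact h2
    · show suf n (sp n (cat n m q r)) (cat n m q r) = r
      rw [h1]; exact h3

lemma pref_bound {n : ℕ} {p : ℕ → ℕ} (hp : IsPref n p) (i : ℕ) : p i ≤ n := by
  by_cases hi : i ∈ Icc 1 n
  · obtain ⟨-, k, hk, hub, -⟩ := hp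
    exact (hub i hi).2.trans hk
  · rw [hp.1 i hi]; omega

instance prefFinite (n : ℕ) : Finite {p : ℕ → ℕ // IsPref n p} := by
  refine Finite.of_injective
    (fun p => fun i : Fin (n + 1) =>
      (⟨p.1 i.1, Nat.lt_succ_of_le (pref_bound p.2 i.1)⟩ : Fin (n + 1))) ?_
  intro a b h
  refine Subtype.ext (funext fun i => ?_)
  by_cases hi : i ≤ n
  · have := congrArg Fin.val (congrFun h ⟨i, by omega⟩)
    simpa using this
  · rw [a.2.1 i (by rw [Finset.mem_Icc]; omega), b.2.1 i (by rw [Finset.mem_Icc]; omega)]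

instance atomFinite (n : ℕ) : Finite {p : ℕ → ℕ // IsAtomicPref n p} :=
  Finite.of_injective (fun p => (⟨p.1, p.2.1⟩ : {p : ℕ → ℕ // IsPref n p}))
    fun a b h => Subtype.ext (congrArg Subtype.val h : (_ : ℕ → ℕ) = _)

instance : Unique {p : ℕ → ℕ // IsPref 0 p} where
  default := ⟨fun _ => 0,
    fun _ _ => rfl, 0, le_rfl, by simp, by simp⟩
  uniq p := by
    refine Subtype.ext (funext fun i => ?_)
    exact p.2.1 i (by rw [Finset.mem_Icc]; omega)

lemma card_pref_zero : Nat.card {p : ℕ → ℕ // IsPref 0 p} = 1 := Nat.card_unique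

lemma card_sigma' {N : ℕ} (f : Fin N → Type) [∀ i, Finite (f i)] :
    Nat.card ((i : Fin N) × f i) = ∑ i : Fin N, Nat.card (f i) := by
  haveI : ∀ i, Fintype (f i) := fun i => Fintype.ofFinite _
  simp [Nat.card_eq_fintype_card, Fintype.card_sigma]

lemma card_rec (n : ℕ) (hn : 1 ≤ n) :
    Nat.card {p : ℕ → ℕ // IsPref n p} =
      ∑ m ∈ Finset.range n,
        Nat.card {q : ℕ → ℕ // IsPref m q} *
          Nat.card {r : ℕ → ℕ // IsAtomicPref (n - m) r} := by
  rw [Nat.card_congr (decEquiv n hn), card_sigma']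
  rw [← Fin.sum_univ_eq_sum_range
    (fun m => Nat.card {q : ℕ → ℕ // IsPref m q} *
      Nat.card {r : ℕ → ℕ // IsAtomicPref (n - m) r}) n]
  exact Finset.sum_congr rfl fun i _ => Nat.card_prod _ _

end AtomicPrefAux

open PowerSeries in
/-- With `P(x) = Σ_{n ≥ 0} f_n xⁿ` the generating function of preference functions
(`f_0 = 1`) and `F(x) = Σ_{n ≥ 1} a_n xⁿ` that of atomic preference functions, we have
`F = 1 − 1/P`, i.e. `P·F = P − 1`: every preference function factors uniquely as a
concatenation of shifted atomic preference functions. -/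
theorem atomic_preference_generating_function :
    (PowerSeries.mk fun n => (Nat.card {p : ℕ → ℕ // IsPref n p} : ℚ)) *
        (PowerSeries.mk fun n =>
          if n = 0 then 0 else (Nat.card {p : ℕ → ℕ // IsAtomicPref n p} : ℚ)) =
      (PowerSeries.mk fun n => (Nat.card {p : ℕ → ℕ // IsPref n p} : ℚ)) - 1 := by
  ext n
  simp only [PowerSeries.coeff_mul, PowerSeries.coeff_mk, map_sub, PowerSeries.coeff_one]
  rw [Finset.Nat.sum_antidiagonal_eq_sum_range_succ
    (fun i j => (Nat.card {p : ℕ → ℕ // IsPref i p} : ℚ) *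
      (if j = 0 then (0 : ℚ) else (Nat.card {p : ℕ → ℕ // IsAtomicPref j p} : ℚ)))]
  rcases Nat.eq_zero_or_pos n with rfl | hn
  · simp [AtomicPrefAux.card_pref_zero]
  · rw [Finset.sum_range_succ, Nat.sub_self, if_pos rfl, mul_zero, add_zero,
      if_neg (by omega : ¬n = 0), sub_zero]
    have h1 : ∀ k ∈ Finset.range n,
        (Nat.card {p : ℕ → ℕ // IsPref k p} : ℚ) *
          (if n - k = 0 then (0 : ℚ) else (Nat.card {p : ℕ → ℕ // IsAtomicPref (n - k) p} : ℚ))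
        = (Nat.card {p : ℕ → ℕ // IsPref k p} : ℚ) *
            (Nat.card {p : ℕ → ℕ // IsAtomicPref (n - k) p} : ℚ) := by
      intro k hk
      rw [Finset.mem_range] at hk
      rw [if_neg (by omega)]
    rw [Finset.sum_congr rfl h1]
    rw [AtomicPrefAux.card_rec n hn]
    push_cast
    rfl
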